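/- Let W : ℝ → ℝ be integrable with ∫_ℝ W(x) dx < 0, and let c > 0 and M > 0. For each integer n ≥ 1 define the cutoff φₙ : ℝ → ℝ by φₙ(x) := 1 for |x| ≤ n, φₙ(x) := (2n − |x|)/n for n ≤ |x| ≤ 2n, and φₙ(x) := 0 for |x| ≥ 2n. Then ∫_ℝ |φₙ'(x)|² dx = 2/n (with φₙ' the almost-everywhere derivative), the integrals ∫_ℝ W φₙ² converge to ∫_ℝ W as n → ∞, and consequently there exists n such that M ∫_ℝ |φₙ'|² + c ∫_ℝ W(x) φₙ(x)² dx < 0. -/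

import Mathlib

open MeasureTheory Filter Topology
open Set

/-- The piecewise-linear cutoff `φₙ`: equal to `1` on `[−n, n]`, affinely
interpolating to `0` on `[n, 2n]` and `[−2n, −n]`, and vanishing outside. -/
noncomputable def cutoff (n : ℕ) : ℝ → ℝ := fun x =>
  if |x| ≤ (n : ℝ) then 1
  else if |x| ≤ 2 * (n : ℝ) then (2 * (n : ℝ) - |x|) / (n : ℝ)
  else 0

lemma measurable_cutoff (n : ℕ) : Measurable (cutoff n) := by
  unfold cutoff
  refine Measurable.ite ?_ measurable_const (Measurable.ite ?_ ?_ measurable_const)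
  · exact measurableSet_le (measurable_id.abs) measurable_const
  · exact measurableSet_le (measurable_id.abs) measurable_const
  · exact ((measurable_const.sub measurable_id.abs).div_const _)

lemma cutoff_nonneg (n : ℕ) (x : ℝ) : 0 ≤ cutoff n x := by
  unfold cutoff
  split_ifs with h1 h2
  · norm_num
  · apply div_nonneg _ (Nat.cast_nonneg n); linarith
  · exact le_rfl

lemma cutoff_le_one (n : ℕ) (x : ℝ) : cutoff n x ≤ 1 := by
  unfold cutoff
  split_ifs with h1 h2
  · exact le_rfl
  · push_neg at h1
    rcases Nat.eq_zero_or_pos n with h | h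
    · simp [h]
    · have hn : (0:ℝ) < n := by exact_mod_cast h
      rw [div_le_one hn]; linarith
  · norm_num

lemma cutoff_eq_one (n : ℕ) (x : ℝ) (h : |x| ≤ n) : cutoff n x = 1 := if_pos h

lemma sq_deriv_cutoff_ae (n : ℕ) (hn : 1 ≤ n) :
    (fun x => (deriv (cutoff n) x) ^ 2)
      =ᵐ[volume] Set.indicator (Ioo (-(2*(n:ℝ))) (-(n:ℝ)) ∪ Ioo (n:ℝ) (2*n))
        (fun _ => 1 / (n:ℝ)^2) := by
  have hn0 : (0:ℝ) < n := by exact_mod_cast hn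
  have hcount : ({-(2*(n:ℝ)), -(n:ℝ), (n:ℝ), 2*(n:ℝ)} : Set ℝ).Countable :=
    (Set.toFinite _).countable
  filter_upwards [hcount.ae_notMem volume] with x hx
  simp only [Set.mem_insert_iff, Set.mem_singleton_iff, not_or] at hx
  obtain ⟨h1, h2, h3, h4⟩ := hx
  have hnotmem : ∀ y : ℝ, |y| < n →
      y ∉ Ioo (-(2*(n:ℝ))) (-(n:ℝ)) ∪ Ioo (n:ℝ) (2*n) := by
    intro y hy hmem
    rw [abs_lt] at hy
    rcases hmem with ⟨ha, hb⟩ | ⟨ha, hb⟩ <;> linarith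
  rcases lt_trichotomy (|x|) (n:ℝ) with h | h | h
  · -- inner region : cutoff = 1 nearby
    have hev : cutoff n =ᶠ[𝓝 x] fun _ => (1:ℝ) := by
      have hopen : IsOpen {y : ℝ | |y| < n} := isOpen_lt (continuous_abs) continuous_const
      filter_upwards [hopen.mem_nhds h] with y hy
      exact cutoff_eq_one n y hy.le
    rw [hev.deriv_eq, deriv_const, Set.indicator_of_notMem (hnotmem x h)]
    ring
  · rcases (abs_eq hn0.le).mp h with he | he
    · exact absurd he h3
    · exact absurd he h2
  · rcases lt_trichotomy (|x|) (2*(n:ℝ)) with h' | h' | h'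
    · -- middle region
      have hsq : (deriv (cutoff n) x)^2 = 1/(n:ℝ)^2 := by
        rcases lt_or_ge 0 x with hx0 | hx0
        · -- x ∈ Ioo n 2n
          have hxmem : x ∈ Ioo (n:ℝ) (2*n) := ⟨by rwa [abs_of_pos hx0] at h,
            by rwa [abs_of_pos hx0] at h'⟩
          have hev : cutoff n =ᶠ[𝓝 x] fun y => (2*(n:ℝ) - y)/n := by
            filter_upwards [isOpen_Ioo.mem_nhds hxmem] with y hy
            have hy0 : (0:ℝ) < y := lt_trans hn0 hy.1
            unfold cutoff
            rw [abs_of_pos hy0, if_neg (not_le.2 hy.1), if_pos hy.2.le]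
          rw [hev.deriv_eq]
          have : HasDerivAt (fun y : ℝ => (2*(n:ℝ) - y)/n) ((-1)/n) x :=
            ((hasDerivAt_id x).const_sub (2*(n:ℝ))).div_const n
          rw [this.deriv]
          field_simp
        · -- x ∈ Ioo (-2n) (-n)
          have hx0' : x < 0 := hx0.lt_of_ne (by intro h0; rw [h0] at h; simp at h; linarith)
          have hxmem : x ∈ Ioo (-(2*(n:ℝ))) (-(n:ℝ)) := by
            rw [abs_of_neg hx0'] at h h'
            constructor <;> linarith
          have hev : cutoff n =ᶠ[𝓝 x] fun y => (2*(n:ℝ) + y)/n := by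
            filter_upwards [isOpen_Ioo.mem_nhds hxmem] with y hy
            have hy0 : y < 0 := lt_trans hy.2 (by linarith)
            unfold cutoff
            rw [abs_of_neg hy0, if_neg (not_le.2 (by linarith [hy.2])), if_pos (by linarith [hy.1])]
            ring_nf
          rw [hev.deriv_eq]
          have : HasDerivAt (fun y : ℝ => (2*(n:ℝ) + y)/n) (1/n) x :=
            ((hasDerivAt_id x).const_add (2*(n:ℝ))).div_const n
          rw [this.deriv]
          field_simp
      rw [hsq, Set.indicator_of_mem]
      rcases lt_or_ge 0 x with hx0 | hx0
      · exact Or.inr ⟨by rwa [abs_of_pos hx0] at h, by rwa [abs_of_pos hx0] at h'⟩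
      · have hx0' : x < 0 := hx0.lt_of_ne (by intro h0; rw [h0] at h; simp at h; linarith)
        rw [abs_of_neg hx0'] at h h'
        exact Or.inl ⟨by linarith, by linarith⟩
    · rcases (abs_eq (by linarith : (0:ℝ) ≤ 2*(n:ℝ))).mp h' with he | he
      · exact absurd he h4
      · exact absurd he h1
    · -- outer region
      have hev : cutoff n =ᶠ[𝓝 x] fun _ => (0:ℝ) := by
        have hopen : IsOpen {y : ℝ | 2*(n:ℝ) < |y|} := isOpen_lt continuous_const continuous_abs
        filter_upwards [hopen.mem_nhds h'] with y hy
        have hy' : 2*(n:ℝ) < |y| := hy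
        unfold cutoff
        rw [if_neg (by push_neg; linarith), if_neg (not_le.2 hy')]
      rw [hev.deriv_eq, deriv_const, Set.indicator_of_notMem]
      · ring
      · intro hmem
        rcases hmem with ⟨ha, hb⟩ | ⟨ha, hb⟩
        · have hb2 : x < 2*(n:ℝ) := by linarith
          have := abs_lt.mpr ⟨ha, hb2⟩; linarith
        · have ha2 : -(2*(n:ℝ)) < x := by linarith
          have := abs_lt.mpr ⟨ha2, hb⟩; linarith

lemma integral_sq_deriv (n : ℕ) (hn : 1 ≤ n) :
    (∫ x : ℝ, (deriv (cutoff n) x) ^ 2) = 2 / (n : ℝ) := by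
  have hn0 : (0:ℝ) < n := by exact_mod_cast hn
  rw [integral_congr_ae (sq_deriv_cutoff_ae n hn)]
  have hmeas : MeasurableSet (Ioo (-(2*(n:ℝ))) (-(n:ℝ)) ∪ Ioo (n:ℝ) (2*n)) :=
    measurableSet_Ioo.union measurableSet_Ioo
  rw [integral_indicator hmeas, setIntegral_const]
  have hdisj : Disjoint (Ioo (-(2*(n:ℝ))) (-(n:ℝ))) (Ioo (n:ℝ) (2*n)) := by
    rw [Set.disjoint_left]
    rintro y ⟨_, hb⟩ ⟨ha', _⟩
    linarith
  rw [measureReal_def, measure_union hdisj measurableSet_Ioo, Real.volume_Ioo, Real.volume_Ioo]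
  rw [ENNReal.toReal_add (by simp) (by simp), ENNReal.toReal_ofReal (by linarith),
    ENNReal.toReal_ofReal (by linarith)]
  have : (-(n:ℝ) - -(2*n)) + (2*(n:ℝ) - n) = 2*n := by ring
  rw [this, smul_eq_mul]
  field_simp

/-- the variational computation with the cutoffs `φₙ`:
the kinetic energy of `φₙ` is `2/n`, the integrals `∫ W φₙ²` converge to
`∫ W < 0`, and hence `M ∫|φₙ'|² + c ∫ W φₙ²` is eventually negative. -/
theorem cutoff_variational
    (W : ℝ → ℝ) (hW : Integrable W) (hWneg : (∫ x : ℝ, W x) < 0)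
    (c M : ℝ) (hc : 0 < c) (hM : 0 < M) :
    (∀ n : ℕ, 1 ≤ n →
      (∫ x : ℝ, (deriv (cutoff n) x) ^ 2) = 2 / (n : ℝ)) ∧
    Tendsto (fun n : ℕ => ∫ x : ℝ, W x * (cutoff n x) ^ 2) atTop
      (𝓝 (∫ x : ℝ, W x)) ∧
    ∃ n : ℕ, 1 ≤ n ∧
      M * (∫ x : ℝ, (deriv (cutoff n) x) ^ 2)
        + c * (∫ x : ℝ, W x * (cutoff n x) ^ 2) < 0 := by
  have habs : ∀ n x, |cutoff n x| ≤ 1 := fun n x =>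
    abs_le.mpr ⟨by linarith [cutoff_nonneg n x], cutoff_le_one n x⟩
  have htend : Tendsto (fun n : ℕ => ∫ x : ℝ, W x * (cutoff n x) ^ 2) atTop
      (𝓝 (∫ x : ℝ, W x)) := by
    apply tendsto_integral_of_dominated_convergence (fun x => |W x|)
    · intro n
      exact hW.aestronglyMeasurable.mul
        (((measurable_cutoff n).pow_const 2).aestronglyMeasurable)
    · exact hW.abs
    · intro n
      filter_upwards with x
      rw [norm_mul]
      have h1 : ‖(cutoff n x) ^ 2‖ ≤ 1 := by
        rw [norm_pow]
        exact pow_le_one₀ (abs_nonneg _) (habs n x)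
      calc ‖W x‖ * ‖(cutoff n x)^2‖ ≤ ‖W x‖ * 1 :=
            mul_le_mul_of_nonneg_left h1 (norm_nonneg _)
        _ = |W x| := by rw [mul_one, Real.norm_eq_abs]
    · filter_upwards with x
      have hev : ∀ᶠ n : ℕ in atTop, W x * (cutoff n x) ^ 2 = W x := by
        filter_upwards [eventually_ge_atTop ⌈|x|⌉₊] with n hn
        have : |x| ≤ (n : ℝ) := le_trans (Nat.le_ceil _) (by exact_mod_cast hn)
        rw [cutoff_eq_one n x this, one_pow, mul_one]
      exact Tendsto.congr' (hev.mono fun n h => h.symm) tendsto_const_nhds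
  refine ⟨integral_sq_deriv, htend, ?_⟩
  set I := ∫ x : ℝ, W x with hI
  have h1 : ∀ᶠ n : ℕ in atTop, c * (∫ x : ℝ, W x * (cutoff n x) ^ 2) < c * I / 2 := by
    have : Tendsto (fun n : ℕ => c * ∫ x : ℝ, W x * (cutoff n x) ^ 2) atTop (𝓝 (c * I)) :=
      htend.const_mul c
    exact this.eventually_lt_const (by nlinarith)
  have h2 : ∀ᶠ n : ℕ in atTop, M * (2 / (n:ℝ)) < -(c * I / 2) := by
    have : Tendsto (fun n : ℕ => M * (2 / (n:ℝ))) atTop (𝓝 (M * 0)) :=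
      (tendsto_const_div_atTop_nhds_zero_nat 2).const_mul M
    rw [mul_zero] at this
    exact this.eventually_lt_const (by nlinarith)
  obtain ⟨n, hn1, hn2, hn3⟩ := ((eventually_ge_atTop 1).and (h1.and h2)).exists
  exact ⟨n, hn1, by rw [integral_sq_deriv n hn1]; linarith⟩
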